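/- Let λ > 0 and h : [0,∞) → ℝ be (r+1)-times differentiable. Define the operator L(h) = h' + λ·h. If Lʳ(h)(t) ≥ 0 for all t ≥ 0 and Lⁱ(h)(0) ≥ 0 for all i = 0, 1, ..., r-1, then h(t) ≥ 0 for all t ≥ 0. -/

import Mathlib

private lemma key_grow (f : ℝ → ℝ) (lam : ℝ) (hlam : 0 < lam)
    (hf : Differentiable ℝ f)
    (hs : ∀ t, 0 ≤ t → 0 ≤ deriv f t + lam * f t) (h0 : 0 ≤ f 0) :
    ∀ t, 0 ≤ t → 0 ≤ f t := by
  set g : ℝ → ℝ := fun t => Real.exp (lam * t) * f t with hg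
  have hder : ∀ t : ℝ, HasDerivAt g (Real.exp (lam * t) * (deriv f t + lam * f t)) t := by
    intro t
    have h1 : HasDerivAt (fun t : ℝ => Real.exp (lam * t)) (Real.exp (lam * t) * lam) t := by
      simpa using ((hasDerivAt_id t).const_mul lam).exp
    have h2 : HasDerivAt (fun y => Real.exp (lam * y) * f y)
        (Real.exp (lam * t) * lam * f t + Real.exp (lam * t) * deriv f t) t :=
      h1.fun_mul (hf t).hasDerivAt
    convert h2 using 1
    ring
  have hmono : MonotoneOn g (Set.Ici 0) := by
    apply monotoneOn_of_deriv_nonneg (convex_Ici 0)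
    · exact Continuous.continuousOn (by
        exact (Real.continuous_exp.comp (continuous_const.mul continuous_id)).mul
          hf.continuous)
    · intro x hx
      exact ((hder x).differentiableAt).differentiableWithinAt
    · intro x hx
      rw [(hder x).deriv]
      have hx0 : 0 ≤ x := le_of_lt (by simpa using hx)
      exact mul_nonneg (Real.exp_nonneg _) (hs x hx0)
  intro t ht
  have : g 0 ≤ g t := hmono (by simp) (by simpa using ht) ht
  have hg0 : g 0 = f 0 := by simp [hg]
  have h2 : 0 ≤ g t := le_trans (by simpa [hg0] using h0) this
  have h2' : 0 ≤ Real.exp (lam * t) * f t := h2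
  have hpos : 0 < Real.exp (lam * t) := Real.exp_pos _
  nlinarith [h2', hpos]

private lemma key_aux (lam : ℝ) (hlam : 0 < lam)
    (L : (ℝ → ℝ) → (ℝ → ℝ))
    (hL : L = fun f => fun t => deriv f t + lam * f t) :
    ∀ (r : ℕ) (h : ℝ → ℝ), ContDiff ℝ (r + 1) h →
      (∀ t, 0 ≤ t → 0 ≤ (L^[r] h) t) → (∀ i < r, 0 ≤ (L^[i] h) 0) →
      ∀ t, 0 ≤ t → 0 ≤ h t := by
  intro r
  induction r with
  | zero =>
    intro h hsm hs _ t ht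
    simpa using hs t ht
  | succ r ih =>
    intro h hsm hs h0 t ht
    have hdiff : Differentiable ℝ h := hsm.differentiable (by norm_num)
    have hsm' : ContDiff ℝ (((r : ℕ) + 1 : ℕ) + 1) h := by exact_mod_cast hsm
    have hderiv : ContDiff ℝ ((r : ℕ) + 1) (deriv h) := by
      have := (contDiff_succ_iff_deriv.mp hsm').2.2
      exact_mod_cast this
    have hh : ContDiff ℝ ((r : ℕ) + 1) h := hsm'.of_le (by exact_mod_cast le_self_add)
    have hLh : ContDiff ℝ (r + 1) (L h) := by
      rw [hL]
      exact hderiv.add (contDiff_const.mul hh)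
    have hLnonneg : ∀ t, 0 ≤ t → 0 ≤ (L h) t := by
      apply ih (L h) hLh
      · intro s hs'
        have := hs s hs'
        rwa [Function.iterate_succ_apply] at this
      · intro i hi
        have := h0 (i + 1) (by omega)
        rwa [Function.iterate_succ_apply] at this
    have h00 : 0 ≤ h 0 := by simpa using h0 0 (by omega)
    apply key_grow h lam hlam hdiff _ h00 t ht
    intro s hs'
    have := hLnonneg s hs'
    rwa [hL] at this

theorem stmt_14 (h : ℝ → ℝ) (lam : ℝ) (hlam : 0 < lam) (r : ℕ)
    (hsmooth : ContDiff ℝ (r + 1) h)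
    (L : (ℝ → ℝ) → (ℝ → ℝ))
    (hL : L = fun f => fun t => deriv f t + lam * f t)
    (hs : ∀ t, 0 ≤ t → (L^[r] h) t ≥ 0)
    (h0 : ∀ i < r, (L^[i] h) 0 ≥ 0) :
    ∀ t, 0 ≤ t → h t ≥ 0 := by
  exact key_aux lam hlam L hL r h hsmooth hs h0
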